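/- A medial quandle Q is m-reductive (i.e. R_x^m(y) = x for all x,y ∈ Q) if and only if α^{(1−t)^{m-1}} = 1 for every α ∈ Dis(Q), where the ℤ[t,t^{-1}]-module structure on Dis(Q) is given by α^t = L_w α L_w^{-1}. -/

import Mathlib

section Quandle
variable {Q : Type*} {op : Q → Q → Q} {L : Q → Equiv.Perm Q}

private lemma qLdist (hL : ∀ x y, L x y = op x y)
    (hldist : ∀ x y w, op x (op y w) = op (op x y) (op x w)) (x y : Q) :
    L (op x y) = L x * L y * (L x)⁻¹ := by
  ext z
  simp only [Equiv.Perm.mul_apply, hL]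
  rw [hldist x y ((L x)⁻¹ z), ← hL x ((L x)⁻¹ z), ← Equiv.Perm.mul_apply, mul_inv_cancel, Equiv.Perm.one_apply]

private lemma qmedA (hL : ∀ x y, L x y = op x y)
    (hmed : ∀ x y u v, op (op x y) (op u v) = op (op x u) (op y v)) (x y u : Q) :
    L (op x y) * L u = L (op x u) * L y := by
  ext v
  simp only [Equiv.Perm.mul_apply, hL]
  exact hmed x y u v

private lemma qmedC (hL : ∀ x y, L x y = op x y)
    (hldist : ∀ x y w, op x (op y w) = op (op x y) (op x w))
    (hmed : ∀ x y u v, op (op x y) (op u v) = op (op x u) (op y v)) (x y u : Q) :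
    L y * (L x)⁻¹ * L u = L u * (L x)⁻¹ * L y := by
  have h := qmedA hL hmed x y u
  rw [qLdist hL hldist x y, qLdist hL hldist x u] at h
  have h2 : L x * (L y * (L x)⁻¹ * L u) = L x * (L u * (L x)⁻¹ * L y) := by
    calc L x * (L y * (L x)⁻¹ * L u) = L x * L y * (L x)⁻¹ * L u := by group
    _ = L x * L u * (L x)⁻¹ * L y := h
    _ = L x * (L u * (L x)⁻¹ * L y) := by group
  exact mul_left_cancel h2

private lemma qmedC' (hL : ∀ x y, L x y = op x y)
    (hldist : ∀ x y w, op x (op y w) = op (op x y) (op x w))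
    (hmed : ∀ x y u v, op (op x y) (op u v) = op (op x u) (op y v)) (x y u : Q) :
    (L u)⁻¹ * L x * (L y)⁻¹ = (L y)⁻¹ * L x * (L u)⁻¹ := by
  have h := congrArg Inv.inv (qmedC hL hldist hmed x y u)
  simpa [mul_inv_rev, mul_assoc] using h

private lemma qgen_comm (hL : ∀ x y, L x y = op x y)
    (hldist : ∀ x y w, op x (op y w) = op (op x y) (op x w))
    (hmed : ∀ x y u v, op (op x y) (op u v) = op (op x u) (op y v)) (a b c d : Q) :
    (L a * (L b)⁻¹) * (L c * (L d)⁻¹) = (L c * (L d)⁻¹) * (L a * (L b)⁻¹) := by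
  have h1 := qmedC hL hldist hmed b a c
  have h2 := qmedC' hL hldist hmed a b d
  calc (L a * (L b)⁻¹) * (L c * (L d)⁻¹) = (L a * (L b)⁻¹ * L c) * (L d)⁻¹ := by group
    _ = (L c * (L b)⁻¹ * L a) * (L d)⁻¹ := by rw [h1]
    _ = L c * ((L b)⁻¹ * L a * (L d)⁻¹) := by group
    _ = L c * ((L d)⁻¹ * L a * (L b)⁻¹) := by rw [h2]
    _ = (L c * (L d)⁻¹) * (L a * (L b)⁻¹) := by group

/-- The displacement group is abelian. -/
private lemma qDis_comm (hL : ∀ x y, L x y = op x y)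
    (hldist : ∀ x y w, op x (op y w) = op (op x y) (op x w))
    (hmed : ∀ x y u v, op (op x y) (op u v) = op (op x u) (op y v))
    {g h : Equiv.Perm Q}
    (hg : g ∈ Subgroup.closure {h : Equiv.Perm Q | ∃ u v : Q, h = L u * (L v)⁻¹})
    (hh : h ∈ Subgroup.closure {h : Equiv.Perm Q | ∃ u v : Q, h = L u * (L v)⁻¹}) :
    g * h = h * g := by
  induction hg, hh using Subgroup.closure_induction₂ with
  | mem x y hx hy =>
    obtain ⟨a, b, rfl⟩ := hx
    obtain ⟨c, d, rfl⟩ := hy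
    exact qgen_comm hL hldist hmed a b c d
  | one_left x hx => group
  | one_right x hx => group
  | mul_left x y z hx hy hz h1 h2 =>
    rw [mul_assoc, h2, ← mul_assoc, h1, mul_assoc]
  | mul_right y z x hy hz hx h1 h2 =>
    rw [← mul_assoc, h1, mul_assoc, h2, ← mul_assoc]
  | inv_left x y hx hy h1 => exact Commute.inv_left h1
  | inv_right x y hx hy h1 => exact Commute.inv_right h1

end Quandle

section Quandle2
variable {Q : Type*} {op : Q → Q → Q} {L : Q → Equiv.Perm Q}

private lemma qconj_gen (hL : ∀ x y, L x y = op x y)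
    (hldist : ∀ x y w, op x (op y w) = op (op x y) (op x w)) (x u v : Q) :
    L x * (L u * (L v)⁻¹) * (L x)⁻¹ = L (op x u) * (L (op x v))⁻¹ := by
  rw [qLdist hL hldist x u, qLdist hL hldist x v]; group

private lemma qconj_mem (hL : ∀ x y, L x y = op x y)
    (hldist : ∀ x y w, op x (op y w) = op (op x y) (op x w))
    {g : Equiv.Perm Q}
    (hg : g ∈ Subgroup.closure {h : Equiv.Perm Q | ∃ u v : Q, h = L u * (L v)⁻¹}) (x : Q) :
    L x * g * (L x)⁻¹ ∈ Subgroup.closure {h : Equiv.Perm Q | ∃ u v : Q, h = L u * (L v)⁻¹} := by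
  induction hg using Subgroup.closure_induction with
  | mem a ha =>
    obtain ⟨u, v, rfl⟩ := ha
    rw [qconj_gen hL hldist]
    exact Subgroup.subset_closure ⟨_, _, rfl⟩
  | one => simpa using one_mem _
  | mul a b ha hb h1 h2 =>
    have e : L x * (a * b) * (L x)⁻¹ = (L x * a * (L x)⁻¹) * (L x * b * (L x)⁻¹) := by group
    rw [e]; exact mul_mem h1 h2
  | inv a ha h1 =>
    have e : L x * a⁻¹ * (L x)⁻¹ = (L x * a * (L x)⁻¹)⁻¹ := by group
    rw [e]; exact inv_mem h1

private lemma qLinvL_mem (hL : ∀ x y, L x y = op x y)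
    (hldist : ∀ x y w, op x (op y w) = op (op x y) (op x w)) (y z : Q) :
    (L y)⁻¹ * L z ∈ Subgroup.closure {h : Equiv.Perm Q | ∃ u v : Q, h = L u * (L v)⁻¹} := by
  apply Subgroup.subset_closure
  refine ⟨(L y)⁻¹ z, y, ?_⟩
  have h := qLdist hL hldist y ((L y)⁻¹ z)
  rw [← hL, ← Equiv.Perm.mul_apply, mul_inv_cancel, Equiv.Perm.one_apply] at h
  rw [h]; group

private lemma qconj_indep (hL : ∀ x y, L x y = op x y)
    (hldist : ∀ x y w, op x (op y w) = op (op x y) (op x w))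
    (hmed : ∀ x y u v, op (op x y) (op u v) = op (op x u) (op y v))
    {g : Equiv.Perm Q}
    (hg : g ∈ Subgroup.closure {h : Equiv.Perm Q | ∃ u v : Q, h = L u * (L v)⁻¹}) (y w : Q) :
    L y * g * (L y)⁻¹ = L w * g * (L w)⁻¹ := by
  have hc := qLinvL_mem hL hldist y w
  have hcomm : ((L y)⁻¹ * L w) * g = g * ((L y)⁻¹ * L w) :=
    qDis_comm hL hldist hmed hc hg
  have hw : L w = L y * ((L y)⁻¹ * L w) := by group
  calc L y * g * (L y)⁻¹
      = L y * (g * ((L y)⁻¹ * L w)) * ((L y)⁻¹ * L w)⁻¹ * (L y)⁻¹ := by group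
    _ = L y * (((L y)⁻¹ * L w) * g) * ((L y)⁻¹ * L w)⁻¹ * (L y)⁻¹ := by rw [hcomm]
    _ = (L y * ((L y)⁻¹ * L w)) * g * (L y * ((L y)⁻¹ * L w))⁻¹ := by group
    _ = L w * g * (L w)⁻¹ := by rw [← hw]

end Quandle2

private def qD {Q : Type*} (L : Q → Equiv.Perm Q) (w : Q) :
    Equiv.Perm Q → Equiv.Perm Q :=
  fun α => α * (L w * α * (L w)⁻¹)⁻¹

section Quandle3
variable {Q : Type*} {op : Q → Q → Q} {L : Q → Equiv.Perm Q}

private lemma qD_mem (hL : ∀ x y, L x y = op x y)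
    (hldist : ∀ x y w, op x (op y w) = op (op x y) (op x w))
    {g : Equiv.Perm Q}
    (hg : g ∈ Subgroup.closure {h : Equiv.Perm Q | ∃ u v : Q, h = L u * (L v)⁻¹}) (y : Q) :
    qD L y g ∈ Subgroup.closure {h : Equiv.Perm Q | ∃ u v : Q, h = L u * (L v)⁻¹} :=
  mul_mem hg (inv_mem (qconj_mem hL hldist hg y))

private lemma qD_indep (hL : ∀ x y, L x y = op x y)
    (hldist : ∀ x y w, op x (op y w) = op (op x y) (op x w))
    (hmed : ∀ x y u v, op (op x y) (op u v) = op (op x u) (op y v))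
    {g : Equiv.Perm Q}
    (hg : g ∈ Subgroup.closure {h : Equiv.Perm Q | ∃ u v : Q, h = L u * (L v)⁻¹}) (y w : Q) :
    qD L y g = qD L w g := by
  unfold qD
  rw [qconj_indep hL hldist hmed hg y w]

private lemma qD_mul (hL : ∀ x y, L x y = op x y)
    (hldist : ∀ x y w, op x (op y w) = op (op x y) (op x w))
    (hmed : ∀ x y u v, op (op x y) (op u v) = op (op x u) (op y v))
    {g h : Equiv.Perm Q}
    (hg : g ∈ Subgroup.closure {h : Equiv.Perm Q | ∃ u v : Q, h = L u * (L v)⁻¹})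
    (hh : h ∈ Subgroup.closure {h : Equiv.Perm Q | ∃ u v : Q, h = L u * (L v)⁻¹}) (w : Q) :
    qD L w (g * h) = qD L w g * qD L w h := by
  have hσg := qconj_mem hL hldist hg w
  have hσh := qconj_mem hL hldist hh w
  have c1 : h * (L w * g * (L w)⁻¹)⁻¹ = (L w * g * (L w)⁻¹)⁻¹ * h :=
    Commute.inv_right (qDis_comm hL hldist hmed hh hσg)
  have c2 : (L w * h * (L w)⁻¹)⁻¹ * (L w * g * (L w)⁻¹)⁻¹
      = (L w * g * (L w)⁻¹)⁻¹ * (L w * h * (L w)⁻¹)⁻¹ :=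
    Commute.inv_inv (qDis_comm hL hldist hmed hσh hσg)
  show g * h * (L w * (g * h) * (L w)⁻¹)⁻¹
      = (g * (L w * g * (L w)⁻¹)⁻¹) * (h * (L w * h * (L w)⁻¹)⁻¹)
  calc g * h * (L w * (g * h) * (L w)⁻¹)⁻¹
      = g * (h * ((L w * h * (L w)⁻¹)⁻¹ * (L w * g * (L w)⁻¹)⁻¹)) := by group
    _ = g * (h * ((L w * g * (L w)⁻¹)⁻¹ * (L w * h * (L w)⁻¹)⁻¹)) := by rw [c2]
    _ = g * ((h * (L w * g * (L w)⁻¹)⁻¹) * (L w * h * (L w)⁻¹)⁻¹) := by group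
    _ = g * (((L w * g * (L w)⁻¹)⁻¹ * h) * (L w * h * (L w)⁻¹)⁻¹) := by rw [c1]
    _ = (g * (L w * g * (L w)⁻¹)⁻¹) * (h * (L w * h * (L w)⁻¹)⁻¹) := by group

private lemma qD_inv (hL : ∀ x y, L x y = op x y)
    (hldist : ∀ x y w, op x (op y w) = op (op x y) (op x w))
    (hmed : ∀ x y u v, op (op x y) (op u v) = op (op x u) (op y v))
    {g : Equiv.Perm Q}
    (hg : g ∈ Subgroup.closure {h : Equiv.Perm Q | ∃ u v : Q, h = L u * (L v)⁻¹}) (w : Q) :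
    qD L w g⁻¹ = (qD L w g)⁻¹ := by
  have hσg := qconj_mem hL hldist hg w
  have c : g⁻¹ * (L w * g * (L w)⁻¹) = (L w * g * (L w)⁻¹) * g⁻¹ :=
    Commute.inv_left (qDis_comm hL hldist hmed hg hσg)
  show g⁻¹ * (L w * g⁻¹ * (L w)⁻¹)⁻¹ = (g * (L w * g * (L w)⁻¹)⁻¹)⁻¹
  have e : (L w * g⁻¹ * (L w)⁻¹)⁻¹ = L w * g * (L w)⁻¹ := by group
  rw [e, c]; group

private lemma qD_one (w : Q) : qD L w (1 : Equiv.Perm Q) = 1 := by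
  show (1 : Equiv.Perm Q) * (L w * 1 * (L w)⁻¹)⁻¹ = 1
  group

private lemma qD_iter_mem (hL : ∀ x y, L x y = op x y)
    (hldist : ∀ x y w, op x (op y w) = op (op x y) (op x w)) (w : Q) (k : ℕ) :
    ∀ {g : Equiv.Perm Q},
      g ∈ Subgroup.closure {h : Equiv.Perm Q | ∃ u v : Q, h = L u * (L v)⁻¹} →
      (qD L w)^[k] g ∈ Subgroup.closure {h : Equiv.Perm Q | ∃ u v : Q, h = L u * (L v)⁻¹} := by
  induction k with
  | zero => intro g hg; simpa using hg
  | succ n ih =>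
    intro g hg
    rw [Function.iterate_succ_apply]
    exact ih (qD_mem hL hldist hg w)

private lemma qD_iter_indep (hL : ∀ x y, L x y = op x y)
    (hldist : ∀ x y w, op x (op y w) = op (op x y) (op x w))
    (hmed : ∀ x y u v, op (op x y) (op u v) = op (op x u) (op y v)) (y w : Q) (k : ℕ) :
    ∀ {g : Equiv.Perm Q},
      g ∈ Subgroup.closure {h : Equiv.Perm Q | ∃ u v : Q, h = L u * (L v)⁻¹} →
      (qD L y)^[k] g = (qD L w)^[k] g := by
  induction k with
  | zero => intro g _; rfl
  | succ n ih =>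
    intro g hg
    rw [Function.iterate_succ_apply, Function.iterate_succ_apply,
      qD_indep hL hldist hmed hg y w]
    exact ih (qD_mem hL hldist hg w)

private lemma qD_iter_mul (hL : ∀ x y, L x y = op x y)
    (hldist : ∀ x y w, op x (op y w) = op (op x y) (op x w))
    (hmed : ∀ x y u v, op (op x y) (op u v) = op (op x u) (op y v)) (w : Q) (k : ℕ) :
    ∀ {g h : Equiv.Perm Q},
      g ∈ Subgroup.closure {h : Equiv.Perm Q | ∃ u v : Q, h = L u * (L v)⁻¹} →
      h ∈ Subgroup.closure {h : Equiv.Perm Q | ∃ u v : Q, h = L u * (L v)⁻¹} →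
      (qD L w)^[k] (g * h) = (qD L w)^[k] g * (qD L w)^[k] h := by
  induction k with
  | zero => intro g h _ _; rfl
  | succ n ih =>
    intro g h hg hh
    rw [Function.iterate_succ_apply, Function.iterate_succ_apply,
      Function.iterate_succ_apply, qD_mul hL hldist hmed hg hh w]
    exact ih (qD_mem hL hldist hg w) (qD_mem hL hldist hh w)

private lemma qD_iter_inv (hL : ∀ x y, L x y = op x y)
    (hldist : ∀ x y w, op x (op y w) = op (op x y) (op x w))
    (hmed : ∀ x y u v, op (op x y) (op u v) = op (op x u) (op y v)) (w : Q) (k : ℕ) :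
    ∀ {g : Equiv.Perm Q},
      g ∈ Subgroup.closure {h : Equiv.Perm Q | ∃ u v : Q, h = L u * (L v)⁻¹} →
      (qD L w)^[k] g⁻¹ = ((qD L w)^[k] g)⁻¹ := by
  induction k with
  | zero => intro g _; rfl
  | succ n ih =>
    intro g hg
    rw [Function.iterate_succ_apply, Function.iterate_succ_apply,
      qD_inv hL hldist hmed hg w]
    exact ih (qD_mem hL hldist hg w)

private lemma qD_iter_one (w : Q) (k : ℕ) : (qD L w)^[k] (1 : Equiv.Perm Q) = 1 := by
  induction k with
  | zero => rfl
  | succ n ih => rw [Function.iterate_succ_apply, qD_one]; exact ih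

private lemma qiter_formula (hL : ∀ x y, L x y = op x y)
    (hidem : ∀ x, op x x = x)
    (hldist : ∀ x y w, op x (op y w) = op (op x y) (op x w)) (n : ℕ) :
    ∀ (x y : Q), (fun a => op a y)^[n + 1] x = ((qD L y)^[n] (L x * (L y)⁻¹)) y := by
  induction n with
  | zero =>
    intro x y
    have hy : L y y = y := by rw [hL]; exact hidem y
    have hy' : (L y)⁻¹ y = y := Equiv.Perm.inv_eq_iff_eq.mpr hy.symm
    show op x y = (L x * (L y)⁻¹) y
    rw [Equiv.Perm.mul_apply, hy', hL]
  | succ n ih =>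
    intro x y
    have e : L (op x y) * (L y)⁻¹ = qD L y (L x * (L y)⁻¹) := by
      rw [qLdist hL hldist x y]
      show _ = (L x * (L y)⁻¹) * (L y * (L x * (L y)⁻¹) * (L y)⁻¹)⁻¹
      group
    calc (fun a => op a y)^[n + 2] x
        = (fun a => op a y)^[n + 1] (op x y) := Function.iterate_succ_apply _ _ _
      _ = ((qD L y)^[n] (L (op x y) * (L y)⁻¹)) y := ih (op x y) y
      _ = ((qD L y)^[n] (qD L y (L x * (L y)⁻¹))) y := by rw [e]
      _ = ((qD L y)^[n + 1] (L x * (L y)⁻¹)) y := by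
          rw [Function.iterate_succ_apply]

end Quandle3

/-- A medial quandle `Q` is `m`-reductive (`R_x ^ m (y) = x` for all `x, y`) if and only if
`α ^ ((1-t)^{m-1}) = 1` for every `α` in the displacement group, where `α ^ t` is conjugation
by a left translation and `α ^ (1-t) = α * (α^t)⁻¹`. -/
theorem m_reductive_iff_polynomial_identity {Q : Type*} (op : Q → Q → Q)
    (L : Q → Equiv.Perm Q) (hL : ∀ x y, L x y = op x y)
    (hidem : ∀ x, op x x = x)
    (hldist : ∀ x y w, op x (op y w) = op (op x y) (op x w))
    (hmed : ∀ x y u v, op (op x y) (op u v) = op (op x u) (op y v))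
    (w : Q) (m : ℕ) (hm : 1 ≤ m) :
    (∀ x y : Q, (fun a => op a x)^[m] y = x) ↔
    ∀ g ∈ Subgroup.closure {h : Equiv.Perm Q | ∃ u v : Q, h = L u * (L v)⁻¹},
      (fun α : Equiv.Perm Q => α * (L w * α * (L w)⁻¹)⁻¹)^[m - 1] g = 1 := by
  have hDdef : (fun α : Equiv.Perm Q => α * (L w * α * (L w)⁻¹)⁻¹) = qD L w := rfl
  have hmk : m = (m - 1) + 1 := by omega
  have hgenmem : ∀ u v : Q, L u * (L v)⁻¹ ∈
      Subgroup.closure {h : Equiv.Perm Q | ∃ u v : Q, h = L u * (L v)⁻¹} :=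
    fun u v => Subgroup.subset_closure ⟨u, v, rfl⟩
  rw [hDdef]
  constructor
  · intro H g hg
    have hfix : ∀ z u : Q, ((qD L w)^[m - 1] (L u * (L z)⁻¹)) z = z := by
      intro z u
      have h0 := H z u
      rw [hmk, qiter_formula hL hidem hldist (m - 1) u z,
        qD_iter_indep hL hldist hmed z w (m - 1) (hgenmem u z)] at h0
      exact h0
    have hgen : ∀ u v : Q, (qD L w)^[m - 1] (L u * (L v)⁻¹) = 1 := by
      intro u v
      ext z
      have e : L u * (L v)⁻¹ = (L u * (L z)⁻¹) * (L v * (L z)⁻¹)⁻¹ := by group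
      rw [e, qD_iter_mul hL hldist hmed w (m - 1) (hgenmem u z)
          (inv_mem (hgenmem v z)),
        qD_iter_inv hL hldist hmed w (m - 1) (hgenmem v z)]
      have hv : ((qD L w)^[m - 1] (L v * (L z)⁻¹))⁻¹ z = z :=
        Equiv.Perm.inv_eq_iff_eq.mpr (hfix z v).symm
      rw [Equiv.Perm.mul_apply, hv, hfix z u, Equiv.Perm.one_apply]
    induction hg using Subgroup.closure_induction with
    | mem a ha => obtain ⟨u, v, rfl⟩ := ha; exact hgen u v
    | one => exact qD_iter_one w (m - 1)
    | mul a b ha hb h1 h2 =>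
      rw [qD_iter_mul hL hldist hmed w (m - 1) ha hb, h1, h2, one_mul]
    | inv a ha h1 =>
      rw [qD_iter_inv hL hldist hmed w (m - 1) ha, h1, inv_one]
  · intro H x y
    rw [hmk, qiter_formula hL hidem hldist (m - 1) y x,
      qD_iter_indep hL hldist hmed x w (m - 1) (hgenmem y x),
      H _ (hgenmem y x), Equiv.Perm.one_apply]
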